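/- arXiv:2405.14846 — 2 statements merged into one kernel-verified Lean document; each statement's English description precedes it below -/
import Mathlib

section
/- Let a and b be nonzero real numbers and assume that the ratio a/b satisfies a Roth-type Diophantine bound with exponent 5/2: there exists a constant C₀ > 0 such that |a/b − p/q| ≥ C₀·q^{−5/2} for every integer p and every integer q ≥ 1. Then there exists a constant C > 0 such that for every real number k ≥ 1, |e^{ika} + e^{ikb} − 2| ≥ C·k^{−4}. -/
open Real

private lemma dist_round_le_half_pi (x : ℝ) :
    |x - π * round (x / π)| ≤ π / 2 := by
  have hpi := Real.pi_pos
  have h1 : |x / π - round (x / π)| ≤ 1 / 2 := abs_sub_round _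
  have h2 : x - π * round (x / π) = π * (x / π - round (x / π)) := by
    field_simp
  rw [h2, abs_mul, abs_of_pos hpi]
  nlinarith [abs_nonneg (x / π - (round (x / π) : ℝ))]

private lemma sin_ge_dist (x : ℝ) :
    2 / π * |x - π * round (x / π)| ≤ |Real.sin x| := by
  have hpi := Real.pi_pos
  have h1 : |x - π * round (x / π)| ≤ π / 2 := dist_round_le_half_pi x
  set p : ℤ := round (x / π) with hp
  set t : ℝ := x - π * p with ht
  have hxt : x = t + p * π := by rw [ht]; ring
  have hsx : |Real.sin x| = |Real.sin t| := by
    rw [hxt, Real.sin_add_int_mul_pi, abs_mul]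
    have h2 : |((-1 : ℝ) ^ p)| = 1 := by
      rcases Int.even_or_odd p with he | ho
      · rw [he.neg_one_zpow, abs_one]
      · rw [ho.neg_one_zpow, abs_neg, abs_one]
    rw [h2, one_mul]
  rw [hsx]
  have h2 : Real.sin |t| ≤ |Real.sin t| := by
    rcases le_or_gt 0 t with h | h
    · rw [abs_of_nonneg h]; exact le_abs_self _
    · rw [abs_of_neg h, Real.sin_neg]; exact neg_le_abs _
  exact le_trans (Real.mul_le_sin (abs_nonneg t) h1) h2

private lemma two_sin_sq_half (θ : ℝ) : 2 * Real.sin (θ / 2) ^ 2 = 1 - Real.cos θ := by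
  have h2 : 2 * (θ / 2) = θ := by ring
  rw [Real.sin_sq, Real.cos_sq, h2]; ring

private lemma norm_exp_sum_ge (θ φ : ℝ) :
    2 * Real.sin (θ / 2) ^ 2 + 2 * Real.sin (φ / 2) ^ 2 ≤
      ‖Complex.exp (Complex.I * (θ : ℂ)) + Complex.exp (Complex.I * (φ : ℂ)) - 2‖ := by
  set z : ℂ := Complex.exp (Complex.I * (θ : ℂ)) + Complex.exp (Complex.I * (φ : ℂ)) - 2 with hz
  have hre : z.re = Real.cos θ + Real.cos φ - 2 := by
    rw [hz, mul_comm Complex.I (θ : ℂ), mul_comm Complex.I (φ : ℂ)]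
    simp [Complex.sub_re, Complex.add_re, Complex.exp_ofReal_mul_I_re]
  have h1 : -z.re ≤ |z.re| := neg_le_abs _
  have h2 : |z.re| ≤ ‖z‖ := by
    exact Complex.abs_re_le_norm z
  have h3 : 2 * Real.sin (θ / 2) ^ 2 + 2 * Real.sin (φ / 2) ^ 2 = -z.re := by
    rw [hre, two_sin_sq_half, two_sin_sq_half]; ring
  linarith

set_option maxHeartbeats 1600000 in
/-- **Lower bound for `|e^{ika} + e^{ikb} − 2|` under a Roth-type condition on `a/b`.**
Let `a, b` be nonzero real numbers such that `|a/b − p/q| ≥ C₀·q^{−5/2}` for all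
integers `p` and all integers `q ≥ 1` (some `C₀ > 0`).  Then there is `C > 0` with
`|e^{ika} + e^{ikb} − 2| ≥ C·k^{−4}` for every real `k ≥ 1`. -/
theorem exp_sum_lower_bound_of_roth (a b : ℝ) (ha : a ≠ 0) (hb : b ≠ 0)
    (hroth : ∃ C₀ > (0 : ℝ), ∀ p : ℤ, ∀ q : ℤ, 1 ≤ q →
      C₀ * (q : ℝ) ^ (-(5 / 2 : ℝ)) ≤ |a / b - (p : ℝ) / (q : ℝ)|) :
    ∃ C > (0 : ℝ), ∀ k : ℝ, 1 ≤ k →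
      C * k ^ (-(4 : ℝ)) ≤
        ‖Complex.exp (Complex.I * ((k * a : ℝ) : ℂ)) +
            Complex.exp (Complex.I * ((k * b : ℝ) : ℂ)) - 2‖ := by
  obtain ⟨C₀, hC₀, hR⟩ := hroth
  have hpi := Real.pi_pos
  have hbpos : 0 < |b| := abs_pos.mpr hb
  obtain ⟨M, hMdef⟩ : ∃ M : ℝ, M = (|a| + |b|) / (2 * π) + 1 := ⟨_, rfl⟩
  have hM1 : 1 ≤ M := by
    have h0 : 0 ≤ (|a| + |b|) / (2 * π) := by positivity
    rw [hMdef]; linarith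
  have hMpos : 0 < M := lt_of_lt_of_le one_pos hM1
  obtain ⟨c₃, hc₃def⟩ : ∃ c : ℝ, c = C₀ * |b| / (2 * M) * M ^ (-(3 / 2 : ℝ)) := ⟨_, rfl⟩
  have hc₃pos : 0 < c₃ := by
    have h := Real.rpow_pos_of_pos hMpos (-(3 / 2 : ℝ))
    rw [hc₃def]; positivity
  obtain ⟨C, hCdef⟩ : ∃ C : ℝ,
      C = min (2 * ((2 / π) ^ 2 * (|b| / 2) ^ 2)) (2 * (2 / π) ^ 2 * c₃ ^ 2) := ⟨_, rfl⟩
  have hb2pos : 0 < (|b| / 2) ^ 2 := by positivity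
  have hCpos : 0 < C := by
    rw [hCdef]
    apply lt_min (by positivity) (by positivity)
  refine ⟨C, hCpos, ?_⟩
  intro k hk
  have hk0 : 0 < k := lt_of_lt_of_le one_pos hk
  obtain ⟨x, hx⟩ : ∃ x : ℝ, x = k * a / 2 := ⟨_, rfl⟩
  obtain ⟨y, hy⟩ : ∃ y : ℝ, y = k * b / 2 := ⟨_, rfl⟩
  obtain ⟨p, hp⟩ : ∃ p : ℤ, p = round (x / π) := ⟨_, rfl⟩
  obtain ⟨q, hq⟩ : ∃ q : ℤ, q = round (y / π) := ⟨_, rfl⟩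
  obtain ⟨δ, hδ⟩ : ∃ d : ℝ, d = |x - π * p| := ⟨_, rfl⟩
  obtain ⟨ε, hε⟩ : ∃ e : ℝ, e = |y - π * q| := ⟨_, rfl⟩
  have hδ0 : 0 ≤ δ := hδ ▸ abs_nonneg _
  have hε0 : 0 ≤ ε := hε ▸ abs_nonneg _
  have hsinx : 2 / π * δ ≤ |Real.sin x| := by rw [hδ, hp]; exact sin_ge_dist x
  have hsiny : 2 / π * ε ≤ |Real.sin y| := by rw [hε, hq]; exact sin_ge_dist y
  have hsinx2 : (2 / π) ^ 2 * δ ^ 2 ≤ Real.sin x ^ 2 := by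
    have h := mul_self_le_mul_self (by positivity) hsinx
    calc (2 / π) ^ 2 * δ ^ 2 = (2 / π * δ) * (2 / π * δ) := by ring
    _ ≤ |Real.sin x| * |Real.sin x| := h
    _ = Real.sin x ^ 2 := by rw [← abs_mul, ← sq, abs_sq]
  have hsiny2 : (2 / π) ^ 2 * ε ^ 2 ≤ Real.sin y ^ 2 := by
    have h := mul_self_le_mul_self (by positivity) hsiny
    calc (2 / π) ^ 2 * ε ^ 2 = (2 / π * ε) * (2 / π * ε) := by ring
    _ ≤ |Real.sin y| * |Real.sin y| := h
    _ = Real.sin y ^ 2 := by rw [← abs_mul, ← sq, abs_sq]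
  have hnorm : 2 * Real.sin x ^ 2 + 2 * Real.sin y ^ 2 ≤
      ‖Complex.exp (Complex.I * ((k * a : ℝ) : ℂ)) +
        Complex.exp (Complex.I * ((k * b : ℝ) : ℂ)) - 2‖ := by
    have h := norm_exp_sum_ge (k * a) (k * b)
    rw [← hx, ← hy] at h
    exact h
  have hk4le1 : k ^ (-(4 : ℝ)) ≤ 1 :=
    Real.rpow_le_one_of_one_le_of_nonpos hk (by norm_num)
  have hk4pos : 0 < k ^ (-(4 : ℝ)) := Real.rpow_pos_of_pos hk0 _
  have hCk : C * k ^ (-(4 : ℝ)) ≤ C := mul_le_of_le_one_right hCpos.le hk4le1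
  have hxabs : |x| = k * |a| / 2 := by
    rw [hx, abs_div, abs_mul, abs_of_pos hk0]; norm_num
  have hyabs : |y| = k * |b| / 2 := by
    rw [hy, abs_div, abs_mul, abs_of_pos hk0]; norm_num
  have hsq : (0 : ℝ) ≤ (2 / π) ^ 2 := by positivity
  have main : C * k ^ (-(4 : ℝ)) ≤ 2 * Real.sin x ^ 2 + 2 * Real.sin y ^ 2 := by
    by_cases hq0 : q = 0
    · -- q = 0 : ε = |y| ≥ |b|/2 already gives a constant lower bound
      have hεy : ε = |y| := by rw [hε, hq0]; simp
      have hylb : |b| / 2 ≤ ε := by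
        rw [hεy, hyabs]
        have h := mul_le_mul_of_nonneg_right hk (le_of_lt hbpos)
        linarith only [h]
      have h2 : (|b| / 2) ^ 2 ≤ ε ^ 2 :=
        pow_le_pow_left₀ (by positivity) hylb 2
      have h3 : (2 / π) ^ 2 * (|b| / 2) ^ 2 ≤ (2 / π) ^ 2 * ε ^ 2 :=
        mul_le_mul_of_nonneg_left h2 hsq
      have hC1 : C ≤ 2 * ((2 / π) ^ 2 * (|b| / 2) ^ 2) := by
        rw [hCdef]; exact min_le_left _ _
      linarith only [hCk, hC1, h3, hsiny2, sq_nonneg (Real.sin x)]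
    · -- q ≠ 0 : apply the Roth hypothesis
      have hq1 : (1 : ℝ) ≤ |(q : ℝ)| := by
        rw [← Int.cast_abs]; exact_mod_cast Int.one_le_abs hq0
      have hqabs_pos : (0 : ℝ) < |(q : ℝ)| := lt_of_lt_of_le one_pos hq1
      have hqR : C₀ * |(q : ℝ)| ^ (-(5 / 2 : ℝ)) ≤ |a / b - (p : ℝ) / (q : ℝ)| := by
        rcases lt_or_gt_of_ne hq0 with hneg | hpos
        · have h := hR (-p) (-q) (by omega)
          have e1 : ((-q : ℤ) : ℝ) = |(q : ℝ)| := by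
            rw [← Int.cast_abs, abs_of_neg hneg]
          have e2 : ((-p : ℤ) : ℝ) / ((-q : ℤ) : ℝ) = (p : ℝ) / (q : ℝ) := by
            push_cast; rw [neg_div_neg_eq]
          rw [e2, e1] at h; exact h
        · have h := hR p q hpos
          have e1 : ((q : ℤ) : ℝ) = |(q : ℝ)| := by
            rw [← Int.cast_abs, abs_of_pos hpos]
          nth_rewrite 1 [e1] at h; exact h
      have hyne : y ≠ 0 := by rw [hy]; positivity
      have hypos : 0 < |y| := abs_pos.mpr hyne
      have hqRne : (q : ℝ) ≠ 0 := by exact_mod_cast hq0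
      have hab : a / b = x / y := by rw [hx, hy]; field_simp
      obtain ⟨η, hηdef⟩ : ∃ e : ℝ, e = max δ ε := ⟨_, rfl⟩
      have hδη : δ ≤ η := hηdef ▸ le_max_left _ _
      have hεη : ε ≤ η := hηdef ▸ le_max_right _ _
      have hη0 : 0 ≤ η := le_trans hδ0 hδη
      -- size bounds on p and q
      have hpbd : |(p : ℝ)| ≤ |x| / π + 1 / 2 := by
        have h1 : |x / π - (p : ℝ)| ≤ 1 / 2 := by rw [hp]; exact abs_sub_round _
        have h2 : |(p : ℝ)| ≤ |x / π| + |x / π - (p : ℝ)| := by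
          calc |(p : ℝ)| = |x / π - (x / π - (p : ℝ))| := by congr 1; ring
            _ ≤ |x / π| + |x / π - (p : ℝ)| := abs_sub _ _
        rw [abs_div, abs_of_pos hpi] at h2
        linarith
      have hqbd : |(q : ℝ)| ≤ |y| / π + 1 / 2 := by
        have h1 : |y / π - (q : ℝ)| ≤ 1 / 2 := by rw [hq]; exact abs_sub_round _
        have h2 : |(q : ℝ)| ≤ |y / π| + |y / π - (q : ℝ)| := by
          calc |(q : ℝ)| = |y / π - (y / π - (q : ℝ))| := by congr 1; ring
            _ ≤ |y / π| + |y / π - (q : ℝ)| := abs_sub _ _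
        rw [abs_div, abs_of_pos hpi] at h2
        linarith
      have hpq : |(p : ℝ)| + |(q : ℝ)| ≤ k * M := by
        have e1 : |x| / π + |y| / π = k * ((|a| + |b|) / (2 * π)) := by
          rw [hxabs, hyabs]; field_simp
        have e2 : k * ((|a| + |b|) / (2 * π)) + 1 ≤ k * M := by
          rw [hMdef]
          have h0 : 0 ≤ (|a| + |b|) / (2 * π) := by positivity
          have h1 : k * ((|a| + |b|) / (2 * π) + 1) = k * ((|a| + |b|) / (2 * π)) + k := by
            ring
          linarith only [h0, h1, hk]
        linarith only [hpbd, hqbd, e1, e2]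
      have hqkM : |(q : ℝ)| ≤ k * M := by
        have h0 := abs_nonneg (p : ℝ); linarith
      -- numerator estimate
      have hnum : |x * q - y * p| ≤ η * (k * M) := by
        have e : x * (q : ℝ) - y * p = (x - π * p) * q - (y - π * q) * p := by ring
        calc |x * (q : ℝ) - y * p| = |(x - π * p) * q - (y - π * q) * p| := by rw [e]
          _ ≤ |(x - π * p) * q| + |(y - π * q) * p| := abs_sub _ _
          _ = δ * |(q : ℝ)| + ε * |(p : ℝ)| := by rw [abs_mul, abs_mul, ← hδ, ← hε]
          _ ≤ η * (|(q : ℝ)| + |(p : ℝ)|) := by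
              have h1 := mul_le_mul_of_nonneg_right hδη (abs_nonneg (q : ℝ))
              have h2 := mul_le_mul_of_nonneg_right hεη (abs_nonneg (p : ℝ))
              linarith only [h1, h2]
          _ ≤ η * (k * M) := by
              apply mul_le_mul_of_nonneg_left _ hη0; linarith
      have hfrac : |a / b - (p : ℝ) / (q : ℝ)| ≤ η * (k * M) / (|y| * |(q : ℝ)|) := by
        rw [hab, div_sub_div _ _ hyne hqRne, abs_div, abs_mul]
        exact div_le_div_of_nonneg_right hnum (by positivity) |>.trans_eq rfl
      have hkey : C₀ * |(q : ℝ)| ^ (-(5 / 2 : ℝ)) ≤ 2 * M / |b| * η / |(q : ℝ)| := by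
        refine le_trans (le_trans hqR hfrac) (le_of_eq ?_)
        rw [hyabs]; field_simp
      have hstep : C₀ * |(q : ℝ)| ^ (-(3 / 2 : ℝ)) ≤ 2 * M / |b| * η := by
        have h := mul_le_mul_of_nonneg_right hkey (le_of_lt hqabs_pos)
        have e : 2 * M / |b| * η / |(q : ℝ)| * |(q : ℝ)| = 2 * M / |b| * η := by
          field_simp
        have e2 : C₀ * |(q : ℝ)| ^ (-(5 / 2 : ℝ)) * |(q : ℝ)| =
            C₀ * |(q : ℝ)| ^ (-(3 / 2 : ℝ)) := by
          rw [mul_assoc]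
          congr 1
          nth_rewrite 2 [show |(q : ℝ)| = |(q : ℝ)| ^ (1 : ℝ) from (Real.rpow_one _).symm]
          rw [← Real.rpow_add hqabs_pos]
          norm_num
        rw [e, e2] at h
        exact h
      have hqrpow : (k * M) ^ (-(3 / 2 : ℝ)) ≤ |(q : ℝ)| ^ (-(3 / 2 : ℝ)) :=
        Real.rpow_le_rpow_of_nonpos hqabs_pos hqkM (by norm_num)
      have hkMrpow : (k * M) ^ (-(3 / 2 : ℝ)) = k ^ (-(3 / 2 : ℝ)) * M ^ (-(3 / 2 : ℝ)) :=
        Real.mul_rpow (le_of_lt hk0) (le_of_lt hMpos)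
      have hηlb : c₃ * k ^ (-(3 / 2 : ℝ)) ≤ η := by
        have h1 : C₀ * (k ^ (-(3 / 2 : ℝ)) * M ^ (-(3 / 2 : ℝ))) ≤ 2 * M / |b| * η := by
          rw [← hkMrpow]
          exact le_trans (mul_le_mul_of_nonneg_left hqrpow (le_of_lt hC₀)) hstep
        have hMr := Real.rpow_pos_of_pos hMpos (-(3 / 2 : ℝ))
        have hkr := Real.rpow_pos_of_pos hk0 (-(3 / 2 : ℝ))
        rw [hc₃def, div_mul_eq_mul_div, div_mul_eq_mul_div, div_le_iff₀ (by positivity)]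
        calc C₀ * |b| * M ^ (-(3 / 2 : ℝ)) * k ^ (-(3 / 2 : ℝ))
            = (C₀ * (k ^ (-(3 / 2 : ℝ)) * M ^ (-(3 / 2 : ℝ)))) * |b| := by ring
          _ ≤ (2 * M / |b| * η) * |b| := mul_le_mul_of_nonneg_right h1 (le_of_lt hbpos)
          _ = η * (2 * M) := by field_simp
      have hη2 : c₃ ^ 2 * k ^ (-(3 : ℝ)) ≤ η ^ 2 := by
        have h := mul_self_le_mul_self (by positivity) hηlb
        have e : k ^ (-(3 / 2 : ℝ)) * k ^ (-(3 / 2 : ℝ)) = k ^ (-(3 : ℝ)) := by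
          rw [← Real.rpow_add hk0]; norm_num
        calc c₃ ^ 2 * k ^ (-(3 : ℝ))
            = (c₃ * k ^ (-(3 / 2 : ℝ))) * (c₃ * k ^ (-(3 / 2 : ℝ))) := by
              rw [show (c₃ * k ^ (-(3/2:ℝ))) * (c₃ * k ^ (-(3/2:ℝ)))
                  = c₃ ^ 2 * (k ^ (-(3/2:ℝ)) * k ^ (-(3/2:ℝ))) from by ring, e]
          _ ≤ η * η := h
          _ = η ^ 2 := (sq η).symm
      have hk34 : k ^ (-(4 : ℝ)) ≤ k ^ (-(3 : ℝ)) :=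
        Real.rpow_le_rpow_of_exponent_le hk (by norm_num)
      have hδε2 : η ^ 2 ≤ δ ^ 2 + ε ^ 2 := by
        rw [hηdef]
        rcases max_cases δ ε with ⟨h1, _⟩ | ⟨h1, _⟩ <;> rw [h1] <;>
          linarith only [sq_nonneg δ, sq_nonneg ε]
      have hC2 : C ≤ 2 * (2 / π) ^ 2 * c₃ ^ 2 := by
        rw [hCdef]; exact min_le_right _ _
      have hsq2 : (0 : ℝ) < 2 * (2 / π) ^ 2 := by positivity
      calc C * k ^ (-(4 : ℝ))
          ≤ 2 * (2 / π) ^ 2 * c₃ ^ 2 * k ^ (-(4 : ℝ)) :=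
            mul_le_mul_of_nonneg_right hC2 (le_of_lt hk4pos)
        _ ≤ 2 * (2 / π) ^ 2 * c₃ ^ 2 * k ^ (-(3 : ℝ)) := by
            apply mul_le_mul_of_nonneg_left hk34; positivity
        _ = 2 * (2 / π) ^ 2 * (c₃ ^ 2 * k ^ (-(3 : ℝ))) := by ring
        _ ≤ 2 * (2 / π) ^ 2 * η ^ 2 := mul_le_mul_of_nonneg_left hη2 (le_of_lt hsq2)
        _ ≤ 2 * (2 / π) ^ 2 * (δ ^ 2 + ε ^ 2) := mul_le_mul_of_nonneg_left hδε2 (le_of_lt hsq2)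
        _ = 2 * ((2 / π) ^ 2 * δ ^ 2) + 2 * ((2 / π) ^ 2 * ε ^ 2) := by ring
        _ ≤ 2 * Real.sin x ^ 2 + 2 * Real.sin y ^ 2 := by linarith only [hsinx2, hsiny2]
  exact le_trans main hnorm
end

section
/- Let α ∈ ℝ be irrational and let k be a nonzero integer. Then for every infinitely differentiable function g: ℝ → ℂ with g(x+1) = e^{2πikα}·g(x) for all x ∈ ℝ, there exists a unique infinitely differentiable function f: ℝ → ℂ with f(x+1) = e^{2πikα}·f(x) for all x ∈ ℝ and −f''(x) = g(x) for all x ∈ ℝ. In other words, for irrational α and k ≠ 0 the operator Δ_k = −d²/dx² is invertible on smooth (k,α)-twisted periodic functions. -/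
open intervalIntegral
open scoped ContDiff

/-- **Invertibility of the twisted Laplacian for irrational `α` and `k ≠ 0`.**
Let `α` be irrational and `k` a nonzero integer.  Then for every smooth
`(k,α)`-twisted periodic function `g : ℝ → ℂ` (i.e. `g(x+1) = e^{2πikα}·g(x)`) there
is a unique smooth `(k,α)`-twisted periodic function `f` with `−f'' = g`. -/
theorem twisted_laplacian_invertible (α : ℝ) (hα : Irrational α) (k : ℤ) (hk : k ≠ 0)
    (g : ℝ → ℂ) (hg : ContDiff ℝ (⊤ : ℕ∞) g)
    (hgtw : ∀ x : ℝ, g (x + 1) =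
      Complex.exp (2 * (Real.pi : ℂ) * Complex.I * (k : ℂ) * (α : ℂ)) * g x) :
    ∃! f : ℝ → ℂ, ContDiff ℝ (⊤ : ℕ∞) f ∧
      (∀ x : ℝ, f (x + 1) =
        Complex.exp (2 * (Real.pi : ℂ) * Complex.I * (k : ℂ) * (α : ℂ)) * f x) ∧
      ∀ x : ℝ, -deriv (deriv f) x = g x := by
  set c : ℂ := Complex.exp (2 * (Real.pi : ℂ) * Complex.I * (k : ℂ) * (α : ℂ)) with hc_def
  -- `c ≠ 1` since `α` is irrational and `k ≠ 0`
  have hc : c ≠ 1 := by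
    intro h
    rw [hc_def, Complex.exp_eq_one_iff] at h
    obtain ⟨n, hn⟩ := h
    have h2 : (2 * (Real.pi : ℂ) * Complex.I) ≠ 0 := by
      simp [Real.pi_ne_zero, Complex.I_ne_zero]
    have hkα : (k : ℂ) * (α : ℂ) = (n : ℂ) := by
      apply mul_left_cancel₀ h2
      linear_combination hn
    have hkαr : ((k : ℝ) * α : ℝ) = (n : ℝ) := by
      exact_mod_cast hkα
    exact (hα.intCast_mul hk).ne_int n hkαr
  have hone : (1 : ℂ) - c ≠ 0 := sub_ne_zero.mpr (Ne.symm hc)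
  have hgc : Continuous g := hg.continuous
  -- first antiderivative
  set G1 : ℝ → ℂ := fun x => ∫ t in (0:ℝ)..x, g t with hG1_def
  have hG1d : ∀ x : ℝ, HasDerivAt G1 (g x) x := fun x =>
    integral_hasDerivAt_right (hgc.intervalIntegrable 0 x)
      (hgc.stronglyMeasurableAtFilter _ _) hgc.continuousAt
  have hG1deriv : deriv G1 = g := funext fun x => (hG1d x).deriv
  have hG1smooth : ContDiff ℝ (⊤ : ℕ∞) G1 := by
    rw [show ((⊤ : ℕ∞) : WithTop ℕ∞) = ∞ from rfl, contDiff_infty_iff_deriv]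
    exact ⟨fun x => (hG1d x).differentiableAt, by rw [hG1deriv]; exact hg⟩
  have hG1c : Continuous G1 := hG1smooth.continuous
  -- second antiderivative
  set G2 : ℝ → ℂ := fun x => ∫ t in (0:ℝ)..x, G1 t with hG2_def
  have hG2d : ∀ x : ℝ, HasDerivAt G2 (G1 x) x := fun x =>
    integral_hasDerivAt_right (hG1c.intervalIntegrable 0 x)
      (hG1c.stronglyMeasurableAtFilter _ _) hG1c.continuousAt
  have hG2deriv : deriv G2 = G1 := funext fun x => (hG2d x).deriv
  have hG2smooth : ContDiff ℝ (⊤ : ℕ∞) G2 := by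
    rw [show ((⊤ : ℕ∞) : WithTop ℕ∞) = ∞ from rfl, contDiff_infty_iff_deriv]
    exact ⟨fun x => (hG2d x).differentiableAt, by rw [hG2deriv]; exact hG1smooth⟩
  set a : ℂ := ∫ t in (0:ℝ)..1, g t with ha_def
  set b : ℂ := ∫ t in (0:ℝ)..1, G1 t with hb_def
  -- twisted behaviour of the antiderivatives
  have hG1tw : ∀ x : ℝ, G1 (x + 1) = a + c * G1 x := by
    intro x
    have h1 : a + (∫ t in (1:ℝ)..(x+1), g t) = G1 (x + 1) :=
      integral_add_adjacent_intervals (hgc.intervalIntegrable _ _) (hgc.intervalIntegrable _ _)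
    have h2 : (∫ t in (1:ℝ)..(x+1), g t) = ∫ t in (0:ℝ)..x, g (t + 1) := by
      rw [integral_comp_add_right]
      norm_num
    have h3 : (∫ t in (0:ℝ)..x, g (t + 1)) = c * ∫ t in (0:ℝ)..x, g t := by
      simp_rw [hgtw]
      rw [integral_const_mul]
    rw [← h1, h2, h3]
  have hG2tw : ∀ x : ℝ, G2 (x + 1) = b + a * x + c * G2 x := by
    intro x
    have h1 : b + (∫ t in (1:ℝ)..(x+1), G1 t) = G2 (x + 1) :=
      integral_add_adjacent_intervals (hG1c.intervalIntegrable _ _) (hG1c.intervalIntegrable _ _)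
    have h2 : (∫ t in (1:ℝ)..(x+1), G1 t) = ∫ t in (0:ℝ)..x, G1 (t + 1) := by
      rw [integral_comp_add_right]
      norm_num
    have h3 : (∫ t in (0:ℝ)..x, G1 (t + 1)) = a * x + c * G2 x := by
      simp_rw [hG1tw]
      rw [integral_add (intervalIntegrable_const)
        ((hG1c.intervalIntegrable _ _).const_mul c), integral_const_mul, integral_const]
      simp [mul_comm]
      exact Or.inl rfl
    rw [← h1, h2, h3]
    ring
  -- the solution
  set B : ℂ := a / (1 - c) with hB_def
  set A : ℂ := (b - B) / (1 - c) with hA_def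
  have hB : B * (1 - c) = a := div_mul_cancel₀ _ hone
  have hA : A * (1 - c) = b - B := div_mul_cancel₀ _ hone
  set f : ℝ → ℂ := fun x => A + B * x - G2 x with hf_def
  have hfd : ∀ x : ℝ, HasDerivAt f (B - G1 x) x := by
    intro x
    have h1 : HasDerivAt (fun x : ℝ => A + B * x) B x := by
      simpa using (Complex.ofRealCLM.hasDerivAt.const_mul B).const_add A
    exact h1.sub (hG2d x)
  have hfderiv : deriv f = fun x => B - G1 x := funext fun x => (hfd x).deriv
  have hfd2 : ∀ x : ℝ, HasDerivAt (deriv f) (-g x) x := by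
    intro x
    rw [hfderiv]
    simpa using (hG1d x).const_sub B
  refine ⟨f, ⟨?_, ?_, ?_⟩, ?_⟩
  · -- smoothness
    have h1 : ContDiff ℝ (⊤ : ℕ∞) (fun x : ℝ => A + B * x) :=
      contDiff_const.add (contDiff_const.mul (Complex.ofRealCLM.contDiff.of_le le_top))
    exact h1.sub hG2smooth
  · -- twisted periodicity
    intro x
    have h := hG2tw x
    simp only [hf_def]
    push_cast
    linear_combination -h + (x : ℂ) * hB + hA
  · -- the equation
    intro x
    rw [(hfd2 x).deriv]
    ring
  · -- uniqueness
    rintro y ⟨hy1, hy2, hy3⟩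
    have hyd : Differentiable ℝ y := hy1.differentiable (by simp)
    have hfd' : Differentiable ℝ f := fun x => (hfd x).differentiableAt
    have hyderiv : ContDiff ℝ (⊤ : ℕ∞) (deriv y) := by
      rw [show ((⊤ : ℕ∞) : WithTop ℕ∞) = ∞ from rfl,
        contDiff_infty_iff_deriv] at hy1
      exact hy1.2
    have hyd2 : Differentiable ℝ (deriv y) := hyderiv.differentiable (by simp)
    have hfderiv_d : Differentiable ℝ (deriv f) := by
      rw [hfderiv]
      exact fun x => ((hG1d x).const_sub B).differentiableAt
    -- d := y - f is affine
    set d : ℝ → ℂ := fun x => y x - f x with hd_def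
    have hdd : ∀ x : ℝ, HasDerivAt d (deriv y x - deriv f x) x := fun x =>
      ((hyd x).hasDerivAt).sub ((hfd' x).hasDerivAt)
    have hdderiv : deriv d = fun x => deriv y x - deriv f x :=
      funext fun x => (hdd x).deriv
    have hdd2 : ∀ x : ℝ, deriv (deriv d) x = 0 := by
      intro x
      rw [hdderiv]
      have h1 : HasDerivAt (fun x => deriv y x - deriv f x)
          (deriv (deriv y) x - deriv (deriv f) x) x :=
        ((hyd2 x).hasDerivAt).sub ((hfderiv_d x).hasDerivAt)
      rw [h1.deriv]
      have e1 : deriv (deriv y) x = -g x := by linear_combination -(hy3 x)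
      have e2 : deriv (deriv f) x = -g x := by
        have h2 := (hfd2 x).deriv
        rw [h2]
      rw [e1, e2, sub_self]
    -- hence deriv d is constant
    have hdiffd : Differentiable ℝ (deriv d) := by
      rw [hdderiv]
      exact fun x => ((hyd2 x).hasDerivAt.sub (hfderiv_d x).hasDerivAt).differentiableAt
    have hconst : ∀ x : ℝ, deriv d x = deriv d 0 :=
      fun x => is_const_of_deriv_eq_zero hdiffd hdd2 x 0
    set B' : ℂ := deriv d 0 with hB'_def
    -- hence d is affine
    set e : ℝ → ℂ := fun x => d x - B' * x with he_def
    have hed : ∀ x : ℝ, HasDerivAt e 0 x := by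
      intro x
      have h1 : HasDerivAt (fun x : ℝ => B' * x) B' x := by
        simpa using Complex.ofRealCLM.hasDerivAt.const_mul B'
      have h2 : HasDerivAt d (deriv d x) x :=
        (hdd x).differentiableAt.hasDerivAt
      have := h2.sub h1
      rw [hconst x] at this
      have h3 : HasDerivAt (d - fun x : ℝ => B' * x) 0 x := by simpa using this
      exact h3
    have heconst : ∀ x : ℝ, e x = e 0 :=
      fun x => is_const_of_deriv_eq_zero (fun x => (hed x).differentiableAt)
        (fun x => (hed x).deriv) x 0
    have haffine : ∀ x : ℝ, d x = d 0 + B' * x := by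
      intro x
      have := heconst x
      simp only [he_def] at this
      push_cast at this
      linear_combination this
    -- twisted periodicity of d kills the affine part
    have hdtw : ∀ x : ℝ, d (x + 1) = c * d x := by
      intro x
      simp only [hd_def]
      rw [hy2 x]
      have hftw : f (x + 1) = c * f x := by
        have h := hG2tw x
        simp only [hf_def]
        push_cast
        linear_combination -h + (x : ℂ) * hB + hA
      rw [hftw]
      ring
    have h0 : d 0 + B' = c * d 0 := by
      have := hdtw 0
      norm_num at this
      rw [haffine 1, haffine 0] at this
      push_cast at this
      linear_combination this
    have h1 : d 0 + 2 * B' = c * (d 0 + B') := by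
      have := hdtw 1
      norm_num at this
      rw [haffine 2, haffine 1] at this
      push_cast at this
      linear_combination this
    have hB'0 : B' = 0 := by
      have hBc : B' * (1 - c) = 0 := by linear_combination h1 - h0
      rcases mul_eq_zero.mp hBc with h | h
      · exact h
      · exact absurd h hone
    have hd00 : d 0 = 0 := by
      have hdc : d 0 * (1 - c) = 0 := by
        rw [hB'0] at h0
        linear_combination h0
      rcases mul_eq_zero.mp hdc with h | h
      · exact h
      · exact absurd h hone
    funext x
    have := haffine x
    rw [hB'0, hd00] at this
    simp only [hd_def] at this
    have : y x - f x = 0 := by simpa using this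
    linear_combination this
end
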